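/- arXiv:2505.12097 — 2 statements merged into one kernel-verified Lean document; each statement's English description precedes it below -/
import Mathlib

section
/- Let X and Y be compact metric spaces, c : X × Y → ℝ continuous, P a Borel probability measure on X, Q a Borel probability measure on Y, and ε > 0. Then the supremum sup_{(φ,ψ) ∈ Φ_c} { ∫ φ dP − ε log ∫ e^{−ψ/ε} dQ } is attained at some pair (φ*, ψ*) ∈ Φ_c that moreover satisfies ψ* = (φ*)^c, where the c-transform is defined by φ^c(y) = inf_{x ∈ X} [ c(x,y) − φ(x) ]; in particular φ* is c̄-concave and ψ* is c-concave. -/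
open MeasureTheory Filter Topology

/-- The optimal transport cost between two measures for the cost function `c`,
defined as the infimum of `∫ c dπ` over all couplings `π` of `P` and `Q`. -/
noncomputable def transportCost {X Y : Type*} [MeasurableSpace X] [MeasurableSpace Y]
    (c : X × Y → ENNReal) (P : Measure X) (Q : Measure Y) : ENNReal :=
  ⨅ π ∈ {π : Measure (X × Y) | π.map Prod.fst = P ∧ π.map Prod.snd = Q}, ∫⁻ z, c z ∂π

/-- The Kullback-Leibler divergence `𝔇_KL(R‖Q) = ∫ log (dR/dQ) dR` if `R ≪ Q`
(and the integral makes sense), and `+∞` otherwise. -/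
noncomputable def klDiv {Y : Type*} [MeasurableSpace Y] (R Q : Measure Y) : ENNReal :=
  open Classical in
  if R ≪ Q ∧ Integrable (llr R Q) R then ENNReal.ofReal (∫ y, llr R Q y ∂ R) else ⊤

/-- The proximal optimal transport divergence with the KL divergence:
`𝔇^c_{KL,ε}(P‖Q) = inf_R [ T_c(P,R) + ε 𝔇_KL(R‖Q) ]`. -/
noncomputable def proxOTKL {X Y : Type*} [MeasurableSpace X] [MeasurableSpace Y]
    (c : X × Y → ENNReal) (ε : ℝ) (P : Measure X) (Q : Measure Y) : ENNReal :=
  ⨅ R : ProbabilityMeasure Y,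
    transportCost c P (R : Measure Y) + ENNReal.ofReal ε * klDiv (R : Measure Y) Q

/-- The dual objective `J(φ,ψ) = ∫ φ dP − ε log ∫ e^{−ψ/ε} dQ`. -/
noncomputable def dualObj {X Y : Type*} [MeasurableSpace X] [MeasurableSpace Y]
    [TopologicalSpace X] [TopologicalSpace Y]
    (P : Measure X) (Q : Measure Y) (ε : ℝ)
    (φ : BoundedContinuousFunction X ℝ) (ψ : BoundedContinuousFunction Y ℝ) : ℝ :=
  ∫ x, φ x ∂P - ε * Real.log (∫ y, Real.exp (-(ψ y) / ε) ∂Q)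

set_option linter.unusedSectionVars false

open BoundedContinuousFunction

section TransformAux

variable {A B : Type*} [MetricSpace A] [CompactSpace A] [Nonempty A]
  [MetricSpace B] [CompactSpace B] [Nonempty B]

variable (d : A × B → ℝ)

/-- The c-transform of a bounded continuous function, as a plain function. -/
noncomputable def ctFun (φ : A →ᵇ ℝ) : B → ℝ := fun y => ⨅ x, (d (x, y) - φ x)

lemma exists_bound_abs (hd : Continuous d) : ∃ M : ℝ, ∀ z, |d z| ≤ M := by
  refine ⟨‖(mkOfCompact ⟨d, hd⟩ : (A × B) →ᵇ ℝ)‖, fun z => ?_⟩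
  simpa [Real.norm_eq_abs] using (mkOfCompact ⟨d, hd⟩ : (A × B) →ᵇ ℝ).norm_coe_le_norm z

lemma ctFun_bddBelow (hd : Continuous d) (φ : A →ᵇ ℝ) (y : B) :
    BddBelow (Set.range fun x => d (x, y) - φ x) := by
  obtain ⟨M, hM⟩ := exists_bound_abs d hd
  refine ⟨-M - ‖φ‖, ?_⟩
  rintro - ⟨x, rfl⟩
  have h1 := hM (x, y)
  have h2 : |φ x| ≤ ‖φ‖ := by simpa [Real.norm_eq_abs] using φ.norm_coe_le_norm x
  have := abs_le.1 h1
  have := abs_le.1 h2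
  dsimp; linarith

lemma ctFun_le (hd : Continuous d) (φ : A →ᵇ ℝ) (x : A) (y : B) :
    ctFun d φ y ≤ d (x, y) - φ x :=
  ciInf_le (ctFun_bddBelow d hd φ y) x

lemma le_ctFun (φ : A →ᵇ ℝ) (y : B) (a : ℝ) (h : ∀ x, a ≤ d (x, y) - φ x) :
    a ≤ ctFun d φ y :=
  le_ciInf h

lemma ctFun_pair (hd : Continuous d) (φ : A →ᵇ ℝ) (x : A) (y : B) :
    φ x + ctFun d φ y ≤ d (x, y) := by
  have := ctFun_le d hd φ x y; linarith

lemma le_ctFun_of_adm (φ : A →ᵇ ℝ) (ψ : B → ℝ) (h : ∀ x y, φ x + ψ y ≤ d (x, y)) (y : B) :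
    ψ y ≤ ctFun d φ y :=
  le_ctFun d φ y _ fun x => by have := h x y; linarith

lemma abs_ctFun_sub_le (hd : Continuous d) (φ : A →ᵇ ℝ) (y y' : B) (r : ℝ)
    (h : ∀ x, |d (x, y) - d (x, y')| ≤ r) :
    |ctFun d φ y - ctFun d φ y'| ≤ r := by
  rw [abs_sub_le_iff]
  constructor
  · have : ctFun d φ y - r ≤ ctFun d φ y' := by
      refine le_ctFun d φ y' _ fun x => ?_
      have h1 := ctFun_le d hd φ x y
      have h2 := abs_le.1 (h x)
      linarith
    linarith
  · have : ctFun d φ y' - r ≤ ctFun d φ y := by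
      refine le_ctFun d φ y _ fun x => ?_
      have h1 := ctFun_le d hd φ x y'
      have h2 := abs_le.1 (h x)
      linarith
    linarith

lemma abs_ctFun_sub_ctFun_le (hd : Continuous d) (φ φ' : A →ᵇ ℝ) (y : B) :
    |ctFun d φ y - ctFun d φ' y| ≤ dist φ φ' := by
  rw [abs_sub_le_iff]
  constructor
  · have : ctFun d φ y - dist φ φ' ≤ ctFun d φ' y := by
      refine le_ctFun d φ' y _ fun x => ?_
      have h1 := ctFun_le d hd φ x y
      have h2 : dist (φ x) (φ' x) ≤ dist φ φ' := dist_coe_le_dist x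
      rw [Real.dist_eq] at h2
      have := abs_le.1 h2
      linarith
    linarith
  · have : ctFun d φ' y - dist φ φ' ≤ ctFun d φ y := by
      refine le_ctFun d φ y _ fun x => ?_
      have h1 := ctFun_le d hd φ' x y
      have h2 : dist (φ x) (φ' x) ≤ dist φ φ' := dist_coe_le_dist x
      rw [Real.dist_eq] at h2
      have := abs_le.1 h2
      linarith
    linarith

lemma ctFun_continuous (hd : Continuous d) (φ : A →ᵇ ℝ) : Continuous (ctFun d φ) := by
  rw [Metric.continuous_iff]
  intro y ε hε
  have hu := CompactSpace.uniformContinuous_of_continuous hd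
  rw [Metric.uniformContinuous_iff] at hu
  obtain ⟨δ, hδ, hδ'⟩ := hu (ε / 2) (by linarith)
  refine ⟨δ, hδ, fun y' hy' => ?_⟩
  rw [Real.dist_eq]
  have : |ctFun d φ y' - ctFun d φ y| ≤ ε / 2 := by
    refine abs_ctFun_sub_le d hd φ y' y (ε / 2) fun x => ?_
    have hdist : dist (x, y') (x, y) < δ := by
      rw [Prod.dist_eq]; simp only [dist_self]; exact max_lt hδ hy'
    have := hδ' hdist
    rw [Real.dist_eq] at this
    linarith
  linarith [this]

/-- The c-transform as a map of bounded continuous functions. -/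
noncomputable def ctB (hd : Continuous d) (φ : A →ᵇ ℝ) : B →ᵇ ℝ :=
  mkOfCompact ⟨ctFun d φ, ctFun_continuous d hd φ⟩

@[simp] lemma ctB_apply (hd : Continuous d) (φ : A →ᵇ ℝ) (y : B) :
    ctB d hd φ y = ⨅ x, (d (x, y) - φ x) := rfl

lemma lipschitz_ctB (hd : Continuous d) : LipschitzWith 1 (ctB d hd) := by
  refine LipschitzWith.of_dist_le_mul fun φ φ' => ?_
  rw [NNReal.coe_one, one_mul]
  refine (BoundedContinuousFunction.dist_le dist_nonneg).2 fun y => ?_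
  rw [Real.dist_eq]
  exact abs_ctFun_sub_ctFun_le d hd φ φ' y

lemma ctB_add_const (hd : Continuous d) (φ : A →ᵇ ℝ) (a : ℝ) :
    ctB d hd (φ + const A a) = ctB d hd φ - const B a := by
  ext y
  have h1 : ∀ x, ctFun d (φ + const A a) y ≤ d (x, y) - φ x - a := by
    intro x
    have := ctFun_le d hd (φ + const A a) x y
    simp only [BoundedContinuousFunction.add_apply, const_apply] at this
    linarith
  have h2 : ∀ x, ctFun d φ y ≤ d (x, y) - φ x := fun x => ctFun_le d hd φ x y
  have h3 : ctFun d (φ + const A a) y + a ≤ ctFun d φ y :=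
    le_ctFun d φ y _ fun x => by linarith [h1 x]
  have h4 : ctFun d φ y - a ≤ ctFun d (φ + const A a) y :=
    le_ctFun d (φ + const A a) y _ fun x => by
      have := h2 x
      simp only [BoundedContinuousFunction.add_apply, const_apply]
      linarith
  show ctFun d (φ + const A a) y = ctFun d φ y - a
  linarith

end TransformAux

section TransformAux2

variable {A B : Type*} [MetricSpace A] [CompactSpace A] [Nonempty A]
  [MetricSpace B] [CompactSpace B] [Nonempty B]

variable (d : A × B → ℝ)

lemma le_ctB_swap_ctB (hd : Continuous d) (φ : A →ᵇ ℝ) (x : A) :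
    φ x ≤ ctB (d ∘ Prod.swap) (hd.comp continuous_swap) (ctB d hd φ) x := by
  refine le_ctFun (d ∘ Prod.swap) (ctB d hd φ) x _ fun y => ?_
  have h := ctFun_pair d hd φ x y
  show φ x ≤ d (x, y) - ctFun d φ y
  linarith

lemma ctB_triple (hd : Continuous d) (φ : A →ᵇ ℝ) :
    ctB d hd (ctB (d ∘ Prod.swap) (hd.comp continuous_swap) (ctB d hd φ)) = ctB d hd φ := by
  have hd' : Continuous (d ∘ Prod.swap) := hd.comp continuous_swap
  ext y
  show ctFun d (ctB (d ∘ Prod.swap) (hd.comp continuous_swap) (ctB d hd φ)) y = ctFun d φ y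
  apply le_antisymm
  · refine le_ciInf fun x => ?_
    have h1 := ctFun_le d hd (ctB (d ∘ Prod.swap) (hd.comp continuous_swap) (ctB d hd φ)) x y
    have h2 := le_ctB_swap_ctB d hd φ x
    have h3 : (ctB (d ∘ Prod.swap) (hd.comp continuous_swap) (ctB d hd φ)) x
        = ctFun (d ∘ Prod.swap) (ctB d hd φ) x := rfl
    rw [h3] at h2
    linarith
  · refine le_ciInf fun x => ?_
    have h2 := ctFun_le (d ∘ Prod.swap) hd' (ctB d hd φ) y x
    have h3 : (d ∘ Prod.swap) (y, x) = d (x, y) := rfl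
    rw [h3] at h2
    have h4 : (ctB d hd φ) y = ctFun d φ y := rfl
    rw [h4] at h2
    show ctFun d φ y ≤ d (x, y) -
      ctFun (d ∘ Prod.swap) (ctB d hd φ) x
    linarith

end TransformAux2


/-- On compact metric spaces with a continuous cost, the dual problem admits a maximizer
`(φ*, ψ*) ∈ Φ_c` with `ψ* = (φ*)^c` (so `ψ*` is `c`-concave) and `φ* = (ψ*)^{c̄}`
(so `φ*` is `c̄`-concave). -/
theorem dual_maximizer_exists_compact
    {X Y : Type*} [MetricSpace X] [CompactSpace X] [Nonempty X]
    [MeasurableSpace X] [BorelSpace X]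
    [MetricSpace Y] [CompactSpace Y] [Nonempty Y]
    [MeasurableSpace Y] [BorelSpace Y]
    (c : X × Y → ℝ) (hc : Continuous c)
    (P : Measure X) (Q : Measure Y) [IsProbabilityMeasure P] [IsProbabilityMeasure Q]
    (ε : ℝ) (hε : 0 < ε) :
    ∃ (φs : BoundedContinuousFunction X ℝ) (ψs : BoundedContinuousFunction Y ℝ),
      (∀ x y, φs x + ψs y ≤ c (x, y)) ∧
      (∀ (φ : BoundedContinuousFunction X ℝ) (ψ : BoundedContinuousFunction Y ℝ),
        (∀ x y, φ x + ψ y ≤ c (x, y)) → dualObj P Q ε φ ψ ≤ dualObj P Q ε φs ψs) ∧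
      (∀ y, ψs y = ⨅ x, (c (x, y) - φs x)) ∧
      (∀ x, φs x = ⨅ y, (c (x, y) - ψs y)) := by
  classical
  have hc' : Continuous (c ∘ Prod.swap) := hc.comp continuous_swap
  obtain ⟨M, hM⟩ := exists_bound_abs c hc
  have hM0 : 0 ≤ M := le_trans (abs_nonneg _) (hM (Classical.arbitrary _))
  set x0 : X := Classical.arbitrary X with hx0
  set K : Set (X →ᵇ ℝ) :=
    {φ | ctB (c ∘ Prod.swap) hc' (ctB c hc φ) = φ ∧ φ x0 = 0} with hKdef
  -- integrability and positivity facts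
  have h_intP : ∀ (φ : X →ᵇ ℝ), Integrable (fun x => φ x) P := fun φ => φ.integrable P
  have h_int : ∀ (ψ : Y →ᵇ ℝ), Integrable (fun y => Real.exp (-(ψ y) / ε)) Q := by
    intro ψ
    have hcont : Continuous fun y => Real.exp (-(ψ y) / ε) :=
      Real.continuous_exp.comp ((ψ.continuous.neg).div_const ε)
    exact (mkOfCompact (⟨_, hcont⟩ : C(Y, ℝ))).integrable Q
  have h_pos : ∀ (ψ : Y →ᵇ ℝ), 0 < ∫ y, Real.exp (-(ψ y) / ε) ∂Q := by
    intro ψ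
    have hle : ∀ y, Real.exp (-‖ψ‖ / ε) ≤ Real.exp (-(ψ y) / ε) := by
      intro y
      apply Real.exp_le_exp.2
      have h1 : -‖ψ‖ ≤ -(ψ y) := by
        have := le_trans (le_abs_self _) (by simpa [Real.norm_eq_abs] using ψ.norm_coe_le_norm y)
        linarith
      gcongr
    calc (0:ℝ) < Real.exp (-‖ψ‖ / ε) := Real.exp_pos _
      _ = ∫ _, Real.exp (-‖ψ‖ / ε) ∂Q := by simp
      _ ≤ ∫ y, Real.exp (-(ψ y) / ε) ∂Q := integral_mono (integrable_const _) (h_int ψ) hle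
  -- monotonicity of the dual objective
  have h_monoψ : ∀ (φ : X →ᵇ ℝ) (ψ ψ' : Y →ᵇ ℝ), (∀ y, ψ y ≤ ψ' y) →
      dualObj P Q ε φ ψ ≤ dualObj P Q ε φ ψ' := by
    intro φ ψ ψ' h
    unfold dualObj
    have hI : ∫ y, Real.exp (-(ψ' y) / ε) ∂Q ≤ ∫ y, Real.exp (-(ψ y) / ε) ∂Q := by
      refine integral_mono (h_int ψ') (h_int ψ) fun y => Real.exp_le_exp.2 ?_
      have h2 : -(ψ' y) ≤ -(ψ y) := by linarith [h y]
      gcongr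
    have hlog := Real.log_le_log (h_pos ψ') hI
    have := mul_le_mul_of_nonneg_left hlog hε.le
    linarith
  have h_monoφ : ∀ (φ φ' : X →ᵇ ℝ) (ψ : Y →ᵇ ℝ), (∀ x, φ x ≤ φ' x) →
      dualObj P Q ε φ ψ ≤ dualObj P Q ε φ' ψ := by
    intro φ φ' ψ h
    unfold dualObj
    have := integral_mono (h_intP φ) (h_intP φ') h
    linarith
  -- shift invariance
  have h_shift : ∀ (φ : X →ᵇ ℝ) (ψ : Y →ᵇ ℝ) (a : ℝ),
      dualObj P Q ε (φ + BoundedContinuousFunction.const X a)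
        (ψ - BoundedContinuousFunction.const Y a) = dualObj P Q ε φ ψ := by
    intro φ ψ a
    unfold dualObj
    have e1 : ∫ x, (φ + BoundedContinuousFunction.const X a) x ∂P = (∫ x, φ x ∂P) + a := by
      simp only [BoundedContinuousFunction.add_apply, BoundedContinuousFunction.const_apply]
      rw [integral_add (h_intP φ) (integrable_const a)]
      simp
    have e2 : ∫ y, Real.exp (-((ψ - BoundedContinuousFunction.const Y a) y) / ε) ∂Q
        = Real.exp (a / ε) * ∫ y, Real.exp (-(ψ y) / ε) ∂Q := by
      rw [← integral_const_mul]
      congr 1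
      ext y
      rw [← Real.exp_add]
      congr 1
      simp only [BoundedContinuousFunction.sub_apply, BoundedContinuousFunction.const_apply]
      ring
    rw [e1, e2, Real.log_mul (Real.exp_ne_zero _) (ne_of_gt (h_pos ψ)), Real.log_exp,
      mul_add, mul_div_cancel₀ _ hε.ne']
    ring
  -- the reduced objective
  set G : (X →ᵇ ℝ) → ℝ := fun φ => dualObj P Q ε φ (ctB c hc φ) with hGdef
  -- continuity of G
  have contI1 : Continuous fun φ : X →ᵇ ℝ => ∫ x, φ x ∂P := by
    have hlip : LipschitzWith 1 fun φ : X →ᵇ ℝ => ∫ x, φ x ∂P := by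
      refine LipschitzWith.of_dist_le_mul fun φ φ' => ?_
      rw [NNReal.coe_one, one_mul, Real.dist_eq, ← integral_sub (h_intP φ) (h_intP φ')]
      calc |∫ x, (φ x - φ' x) ∂P| ≤ ∫ x, |φ x - φ' x| ∂P := by
            simpa [Real.norm_eq_abs] using norm_integral_le_integral_norm (fun x => φ x - φ' x) (μ := P)
        _ ≤ ∫ _, dist φ φ' ∂P := by
            refine integral_mono ((h_intP φ).sub (h_intP φ')).abs (integrable_const _) fun x => ?_
            rw [← Real.dist_eq]
            exact BoundedContinuousFunction.dist_coe_le_dist x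
        _ = dist φ φ' := by simp
    exact hlip.continuous
  have contI2 : Continuous fun ψ : Y →ᵇ ℝ => ∫ y, Real.exp (-(ψ y) / ε) ∂Q := by
    rw [Metric.continuous_iff]
    intro ψ0 e he
    set C : ℝ := 2 * Real.exp (‖ψ0‖ / ε) / ε with hCdef
    have hCpos : 0 < C := by positivity
    refine ⟨min ε (e / (C + 1)), lt_min hε (by positivity), fun ψ hψ => ?_⟩
    have hd1 : dist ψ ψ0 < ε := lt_of_lt_of_le hψ (min_le_left _ _)
    have key : ∀ y, |Real.exp (-(ψ y) / ε) - Real.exp (-(ψ0 y) / ε)| ≤ C * dist ψ ψ0 := by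
      intro y
      have hdy : |ψ0 y - ψ y| ≤ dist ψ ψ0 := by
        rw [abs_sub_comm, ← Real.dist_eq]
        exact BoundedContinuousFunction.dist_coe_le_dist y
      have hb : |(-(ψ y) / ε) - (-(ψ0 y) / ε)| = |ψ0 y - ψ y| / ε := by
        rw [← sub_div, abs_div, abs_of_pos hε, neg_sub_neg]
      have hsmall : |(-(ψ y) / ε) - (-(ψ0 y) / ε)| ≤ 1 := by
        rw [hb, div_le_one hε]
        linarith
      have factor : Real.exp (-(ψ y) / ε) - Real.exp (-(ψ0 y) / ε)
          = Real.exp (-(ψ0 y) / ε) * (Real.exp ((-(ψ y) / ε) - (-(ψ0 y) / ε)) - 1) := by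
        rw [mul_sub, ← Real.exp_add, mul_one]
        congr 1
        ring
      rw [factor, abs_mul, Real.abs_exp]
      have h1 : |Real.exp ((-(ψ y) / ε) - (-(ψ0 y) / ε)) - 1|
          ≤ 2 * |(-(ψ y) / ε) - (-(ψ0 y) / ε)| := Real.abs_exp_sub_one_le hsmall
      have h2 : Real.exp (-(ψ0 y) / ε) ≤ Real.exp (‖ψ0‖ / ε) := by
        apply Real.exp_le_exp.2
        have : -(ψ0 y) ≤ ‖ψ0‖ := by
          have := abs_le.1 (by simpa [Real.norm_eq_abs] using ψ0.norm_coe_le_norm y)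
          linarith [this.1]
        gcongr
      calc Real.exp (-(ψ0 y) / ε) * |Real.exp ((-(ψ y) / ε) - (-(ψ0 y) / ε)) - 1|
          ≤ Real.exp (‖ψ0‖ / ε) * (2 * (|ψ0 y - ψ y| / ε)) := by
            rw [← hb]
            exact mul_le_mul h2 h1 (abs_nonneg _) (Real.exp_pos _).le
        _ ≤ Real.exp (‖ψ0‖ / ε) * (2 * (dist ψ ψ0 / ε)) := by gcongr
        _ = C * dist ψ ψ0 := by rw [hCdef]; field_simp
    have hint : |(∫ y, Real.exp (-(ψ y) / ε) ∂Q) - ∫ y, Real.exp (-(ψ0 y) / ε) ∂Q|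
        ≤ C * dist ψ ψ0 := by
      rw [← integral_sub (h_int ψ) (h_int ψ0)]
      calc |∫ y, (Real.exp (-(ψ y) / ε) - Real.exp (-(ψ0 y) / ε)) ∂Q|
          ≤ ∫ y, |Real.exp (-(ψ y) / ε) - Real.exp (-(ψ0 y) / ε)| ∂Q := by
            simpa [Real.norm_eq_abs] using norm_integral_le_integral_norm
              (fun y => Real.exp (-(ψ y) / ε) - Real.exp (-(ψ0 y) / ε)) (μ := Q)
        _ ≤ ∫ _, C * dist ψ ψ0 ∂Q :=
            integral_mono ((h_int ψ).sub (h_int ψ0)).abs (integrable_const _) key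
        _ = C * dist ψ ψ0 := by simp
    rw [Real.dist_eq]
    have h3 : dist ψ ψ0 < e / (C + 1) := lt_of_lt_of_le hψ (min_le_right _ _)
    have h4 : C * dist ψ ψ0 < C * (e / (C + 1)) := by
      exact mul_lt_mul_of_pos_left h3 hCpos
    have h5 : C * (e / (C + 1)) < e := by
      rw [mul_div_assoc']
      rw [div_lt_iff₀ (by positivity)]
      nlinarith
    linarith
  have hGcont : Continuous G := by
    have hTcont : Continuous (ctB c hc) := (lipschitz_ctB c hc).continuous
    have l1 : Continuous fun φ : X →ᵇ ℝ => ∫ y, Real.exp (-((ctB c hc φ) y) / ε) ∂Q :=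
      contI2.comp hTcont
    have l2 : Continuous fun φ : X →ᵇ ℝ =>
        Real.log (∫ y, Real.exp (-((ctB c hc φ) y) / ε) ∂Q) := by
      exact l1.log fun φ0 => (h_pos (ctB c hc φ0)).ne'
    exact contI1.sub (continuous_const.mul l2)
  -- modulus of continuity for elements of K
  have hKmod : ∀ φ ∈ K, ∀ (x x' : X) (r : ℝ), (∀ y, |c (x, y) - c (x', y)| ≤ r) →
      |φ x - φ x'| ≤ r := by
    intro φ hφ x x' r hr
    have e : ∀ z, φ z = ctFun (c ∘ Prod.swap) (ctB c hc φ) z := by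
      intro z
      conv_lhs => rw [← hφ.1]
      rfl
    rw [e x, e x']
    exact abs_ctFun_sub_le (c ∘ Prod.swap) hc' (ctB c hc φ) x x' r fun y => hr y
  have hKbound : ∀ φ ∈ K, ∀ x, |φ x| ≤ 2 * M := by
    intro φ hφ x
    have h := hKmod φ hφ x x0 (2 * M) fun y => by
      have h1 := hM (x, y); have h2 := hM (x0, y)
      calc |c (x, y) - c (x0, y)| ≤ |c (x, y)| + |c (x0, y)| := abs_sub _ _
        _ ≤ 2 * M := by linarith
    simpa [hφ.2] using h
  -- K is compact
  have hKclosed : IsClosed K := by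
    have h1 : IsClosed {φ : X →ᵇ ℝ | ctB (c ∘ Prod.swap) hc' (ctB c hc φ) = φ} :=
      isClosed_eq ((lipschitz_ctB (c ∘ Prod.swap) hc').continuous.comp
        (lipschitz_ctB c hc).continuous) continuous_id
    have h2 : IsClosed {φ : X →ᵇ ℝ | φ x0 = 0} :=
      isClosed_eq (continuous_eval_const x0) continuous_const
    exact h1.inter h2
  have hKcomp : IsCompact K := by
    refine BoundedContinuousFunction.arzela_ascoli₂ (Metric.closedBall (0:ℝ) (2 * M))
      (isCompact_closedBall _ _) K hKclosed (fun f x hf => ?_) ?_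
    · rw [Metric.mem_closedBall, Real.dist_eq]
      simpa using hKbound f hf x
    · intro x
      rw [Metric.equicontinuousAt_iff]
      intro e he
      have hu := CompactSpace.uniformContinuous_of_continuous hc
      rw [Metric.uniformContinuous_iff] at hu
      obtain ⟨δ, hδ, hδ'⟩ := hu (e / 2) (by linarith)
      refine ⟨δ, hδ, fun x' hx' φ => ?_⟩
      rw [Real.dist_eq]
      have : |(φ : X →ᵇ ℝ) x - (φ : X →ᵇ ℝ) x'| ≤ e / 2 := by
        refine hKmod φ φ.2 x x' (e / 2) fun y => ?_
        have hdist : dist (x, y) (x', y) < δ := by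
          rw [Prod.dist_eq]
          simp only [dist_self]
          exact max_lt (by rw [dist_comm]; exact hx') hδ
        have := hδ' hdist
        rw [Real.dist_eq] at this
        linarith
      linarith
  -- normalization: every admissible pair is dominated by G on K
  have hnorm : ∀ (φ : X →ᵇ ℝ) (ψ : Y →ᵇ ℝ), (∀ x y, φ x + ψ y ≤ c (x, y)) →
      ∃ φ' ∈ K, dualObj P Q ε φ ψ ≤ G φ' := by
    intro φ ψ hadm
    set χ : X →ᵇ ℝ := ctB (c ∘ Prod.swap) hc' (ctB c hc φ) with hχdef
    set a : ℝ := χ x0 with hadef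
    have htripleX : ctB c hc χ = ctB c hc φ := ctB_triple c hc φ
    have hsub : χ + BoundedContinuousFunction.const X (-a)
        = χ - BoundedContinuousFunction.const X a := by
      ext z; simp [sub_eq_add_neg]
    have hTcshift : ctB c hc (χ + BoundedContinuousFunction.const X (-a))
        = ctB c hc χ + BoundedContinuousFunction.const Y a := by
      rw [ctB_add_const c hc χ (-a)]
      ext z; simp [sub_eq_add_neg]
    refine ⟨χ + BoundedContinuousFunction.const X (-a), ⟨?_, ?_⟩, ?_⟩
    · -- fixed point property
      show ctB (c ∘ Prod.swap) hc'
          (ctB c hc (χ + BoundedContinuousFunction.const X (-a)))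
          = χ + BoundedContinuousFunction.const X (-a)
      rw [ctB_add_const c hc χ (-a), htripleX]
      have h2 : ctB c hc φ - BoundedContinuousFunction.const Y (-a)
          = ctB c hc φ + BoundedContinuousFunction.const Y a := by
        ext z; simp [sub_eq_add_neg]
      rw [h2, ctB_add_const (c ∘ Prod.swap) hc' (ctB c hc φ) a, ← hχdef]
      ext z; simp [sub_eq_add_neg]
    · show (χ + BoundedContinuousFunction.const X (-a)) x0 = 0
      simp [hadef]
    · -- the chain of inequalities
      have s1 : dualObj P Q ε φ ψ ≤ dualObj P Q ε φ (ctB c hc φ) :=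
        h_monoψ φ ψ (ctB c hc φ) fun y => le_ctFun_of_adm c φ (fun y => ψ y) hadm y
      have s2 : dualObj P Q ε φ (ctB c hc φ) ≤ dualObj P Q ε χ (ctB c hc φ) :=
        h_monoφ φ χ _ fun x => le_ctB_swap_ctB c hc φ x
      have s3 : dualObj P Q ε χ (ctB c hc φ) = dualObj P Q ε χ (ctB c hc χ) := by
        rw [htripleX]
      have s4 : dualObj P Q ε (χ + BoundedContinuousFunction.const X (-a))
          (ctB c hc χ - BoundedContinuousFunction.const Y (-a))
          = dualObj P Q ε χ (ctB c hc χ) := h_shift χ (ctB c hc χ) (-a)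
      have s5 : G (χ + BoundedContinuousFunction.const X (-a))
          = dualObj P Q ε (χ + BoundedContinuousFunction.const X (-a))
            (ctB c hc χ - BoundedContinuousFunction.const Y (-a)) := by
        simp only [hGdef]
        rw [ctB_add_const c hc χ (-a)]
      rw [s5, s4]
      linarith
  -- K is nonempty
  have hKne : K.Nonempty := by
    obtain ⟨φ', hφ', -⟩ := hnorm 0 (ctB c hc 0) fun x y => ctFun_pair c hc 0 x y
    exact ⟨φ', hφ'⟩
  -- maximize G over K
  obtain ⟨φs, hφsK, hmax⟩ := hKcomp.exists_isMaxOn hKne hGcont.continuousOn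
  refine ⟨φs, ctB c hc φs, ?_, ?_, ?_, ?_⟩
  · exact fun x y => ctFun_pair c hc φs x y
  · intro φ ψ hadm
    obtain ⟨φ', hφ', hle⟩ := hnorm φ ψ hadm
    have := hmax hφ'
    simp only [hGdef] at this
    exact hle.trans this
  · intro y; rfl
  · intro x
    have h := hφsK.1
    conv_lhs => rw [← h]
    rfl
end

section
/- Let n = n₁ + n₂, X = ℝⁿ, p ≥ 1, with cost c(x,y) = ‖x−y‖_p^p (the p-th power of the ℓ^p norm). Let P₁, Q₁ be Borel probability measures on ℝ^{n₁} and P₂, Q₂ Borel probability measures on ℝ^{n₂}, all with finite p-th moments. Then for every ε > 0 the proximal p-Wasserstein KL divergence is additive over products: 𝔇^p_{KL,ε}(P₁ ⊗ P₂ ‖ Q₁ ⊗ Q₂) = 𝔇^p_{KL,ε}(P₁ ‖ Q₁) + 𝔇^p_{KL,ε}(P₂ ‖ Q₂), where on each factor ℝ^{n_i} the divergence is defined with the cost ‖x−y‖_p^p on that factor. -/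
open MeasureTheory Filter Topology

/-- The `ℓ^p` transport cost `c(x,y) = ‖x − y‖_p^p = ∑ i, |x i − y i|^p` on `ℝ^m`. -/
noncomputable def lpCost (m : ℕ) (p : ℝ) : ((Fin m → ℝ) × (Fin m → ℝ)) → ENNReal :=
  fun z => ENNReal.ofReal (∑ i, |z.1 i - z.2 i| ^ p)


namespace ProxAux

section Basic

variable {α β : Type*} [MeasurableSpace α] [MeasurableSpace β]


lemma le_biInf_add_biInf {ι κ : Type*} {s : Set ι} {t : Set κ}
    (hs : s.Nonempty) (ht : t.Nonempty) {f : ι → ENNReal} {g : κ → ENNReal} {a : ENNReal}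
    (h : ∀ x ∈ s, ∀ y ∈ t, a ≤ f x + g y) :
    a ≤ (⨅ x ∈ s, f x) + ⨅ y ∈ t, g y := by
  haveI : Nonempty s := hs.to_subtype
  haveI : Nonempty t := ht.to_subtype
  rw [← iInf_subtype'', ← iInf_subtype'', ENNReal.iInf_add]
  refine le_iInf fun x => ?_
  rw [ENNReal.add_iInf]
  exact le_iInf fun y => h x x.2 y y.2

lemma ae_comp_fst {μ : Measure α} {ν : Measure β} [SFinite μ] [SFinite ν] {p : α → Prop}
    (h : ∀ᵐ x ∂μ, p x) : ∀ᵐ z ∂μ.prod ν, p z.1 := by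
  rw [ae_iff] at h ⊢
  have hset : {z : α × β | ¬ p z.1} = {x | ¬ p x} ×ˢ Set.univ := by ext z; simp
  rw [hset, Measure.prod_prod, h, zero_mul]

lemma ae_comp_snd {μ : Measure α} {ν : Measure β} [SFinite μ] [SFinite ν] {p : β → Prop}
    (h : ∀ᵐ y ∂ν, p y) : ∀ᵐ z ∂μ.prod ν, p z.2 := by
  rw [ae_iff] at h ⊢
  have hset : {z : α × β | ¬ p z.2} = Set.univ ×ˢ {y | ¬ p y} := by ext z; simp
  rw [hset, Measure.prod_prod, h, mul_zero]

/-- If `R ≪ μ ⊗ ν` then `R ≪ (fst_* R) ⊗ ν`. -/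
lemma absolutelyContinuous_prod_fst (R : Measure (α × β)) [IsFiniteMeasure R]
    (μ : Measure α) (ν : Measure β) [SFinite μ] [SFinite ν]
    (h : R ≪ μ.prod ν) : R ≪ (R.map Prod.fst).prod ν := by
  haveI : IsFiniteMeasure (R.map Prod.fst) := by
    constructor
    rw [Measure.map_apply measurable_fst MeasurableSet.univ]
    exact measure_lt_top R _
  refine Measure.AbsolutelyContinuous.mk fun A hA h0 => ?_
  set B : Set α := {x | ν (Prod.mk x ⁻¹' A) = 0} with hBdef
  have hBm : MeasurableSet B := measurable_measure_prodMk_left hA (measurableSet_singleton 0)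
  have hslice : ∀ᵐ x ∂(R.map Prod.fst), ν (Prod.mk x ⁻¹' A) = 0 := by
    rw [Measure.prod_apply hA] at h0
    exact (lintegral_eq_zero_iff (measurable_measure_prodMk_left hA)).mp h0
  have hBc : R (Prod.fst ⁻¹' Bᶜ) = 0 := by
    rw [← Measure.map_apply measurable_fst hBm.compl]
    rw [ae_iff] at hslice
    exact hslice
  have hAB : (μ.prod ν) (A ∩ B ×ˢ Set.univ) = 0 := by
    rw [Measure.prod_apply (hA.inter (hBm.prod MeasurableSet.univ))]
    rw [lintegral_eq_zero_iff (measurable_measure_prodMk_left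
      (hA.inter (hBm.prod MeasurableSet.univ)))]
    refine Filter.Eventually.of_forall fun x => ?_
    by_cases hx : x ∈ B
    · have hsub : Prod.mk x ⁻¹' (A ∩ B ×ˢ Set.univ) ⊆ Prod.mk x ⁻¹' A :=
        Set.preimage_mono Set.inter_subset_left
      exact le_antisymm ((measure_mono hsub).trans_eq hx) zero_le
    · have : Prod.mk x ⁻¹' (A ∩ B ×ˢ Set.univ) = ∅ := by
        ext y; simp [hx]
      simp [this]
  have hsub : A ⊆ (A ∩ B ×ˢ Set.univ) ∪ Prod.fst ⁻¹' Bᶜ := by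
    intro z hz
    by_cases hzB : z.1 ∈ B
    · exact Or.inl ⟨hz, hzB, Set.mem_univ _⟩
    · exact Or.inr hzB
  refine le_antisymm ?_ zero_le
  calc R A ≤ R ((A ∩ B ×ˢ Set.univ) ∪ Prod.fst ⁻¹' Bᶜ) := measure_mono hsub
    _ ≤ R (A ∩ B ×ˢ Set.univ) + R (Prod.fst ⁻¹' Bᶜ) := measure_union_le _ _
    _ ≤ 0 := by rw [h hAB, hBc, add_zero]

/-- If `R ≪ μ ⊗ ν` then `R ≪ μ ⊗ (snd_* R)`. -/
lemma absolutelyContinuous_prod_snd (R : Measure (α × β)) [IsFiniteMeasure R]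
    (μ : Measure α) (ν : Measure β) [SFinite μ] [SFinite ν]
    (h : R ≪ μ.prod ν) : R ≪ μ.prod (R.map Prod.snd) := by
  haveI : IsFiniteMeasure (R.map Prod.snd) := by
    constructor
    rw [Measure.map_apply measurable_snd MeasurableSet.univ]
    exact measure_lt_top R _
  refine Measure.AbsolutelyContinuous.mk fun A hA h0 => ?_
  set B : Set β := {y | μ ((fun x => (x, y)) ⁻¹' A) = 0} with hBdef
  have hBm : MeasurableSet B :=
    measurable_measure_prodMk_right hA (measurableSet_singleton 0)
  have hslice : ∀ᵐ y ∂(R.map Prod.snd), μ ((fun x => (x, y)) ⁻¹' A) = 0 := by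
    rw [Measure.prod_apply_symm hA] at h0
    exact (lintegral_eq_zero_iff (measurable_measure_prodMk_right hA)).mp h0
  have hBc : R (Prod.snd ⁻¹' Bᶜ) = 0 := by
    rw [← Measure.map_apply measurable_snd hBm.compl]
    rw [ae_iff] at hslice
    exact hslice
  have hAB : (μ.prod ν) (A ∩ Set.univ ×ˢ B) = 0 := by
    rw [Measure.prod_apply_symm (hA.inter (MeasurableSet.univ.prod hBm))]
    rw [lintegral_eq_zero_iff (measurable_measure_prodMk_right
      (hA.inter (MeasurableSet.univ.prod hBm)))]
    refine Filter.Eventually.of_forall fun y => ?_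
    by_cases hy : y ∈ B
    · have hsub : (fun x => (x, y)) ⁻¹' (A ∩ Set.univ ×ˢ B) ⊆ (fun x => (x, y)) ⁻¹' A :=
        Set.preimage_mono Set.inter_subset_left
      exact le_antisymm ((measure_mono hsub).trans_eq hy) zero_le
    · have : (fun x => (x, y)) ⁻¹' (A ∩ Set.univ ×ˢ B) = ∅ := by
        ext x; simp [hy]
      simp [this]
  have hsub : A ⊆ (A ∩ Set.univ ×ˢ B) ∪ Prod.snd ⁻¹' Bᶜ := by
    intro z hz
    by_cases hzB : z.2 ∈ B
    · exact Or.inl ⟨hz, Set.mem_univ _, hzB⟩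
    · exact Or.inr hzB
  refine le_antisymm ?_ zero_le
  calc R A ≤ R ((A ∩ Set.univ ×ˢ B) ∪ Prod.snd ⁻¹' Bᶜ) := measure_mono hsub
    _ ≤ R (A ∩ Set.univ ×ˢ B) + R (Prod.snd ⁻¹' Bᶜ) := measure_union_le _ _
    _ ≤ 0 := by rw [h hAB, hBc, add_zero]

/-- A measure absolutely continuous w.r.t. a product measure is absolutely continuous
w.r.t. the product of its own marginals. -/
lemma absolutelyContinuous_prod_marginals (R : Measure (α × β)) [IsFiniteMeasure R]
    (μ : Measure α) (ν : Measure β) [SFinite μ] [SFinite ν]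
    (h : R ≪ μ.prod ν) : R ≪ (R.map Prod.fst).prod (R.map Prod.snd) := by
  haveI : IsFiniteMeasure (R.map Prod.fst) := by
    constructor
    rw [Measure.map_apply measurable_fst MeasurableSet.univ]
    exact measure_lt_top R _
  exact absolutelyContinuous_prod_snd R _ _ (absolutelyContinuous_prod_fst R μ ν h)

/-- Radon–Nikodym derivative of a product of measures w.r.t. a product of measures. -/
lemma rnDeriv_prod_ae {μ₁ ν₁ : Measure α} {μ₂ ν₂ : Measure β}
    [IsFiniteMeasure μ₁] [IsFiniteMeasure μ₂] [SigmaFinite ν₁] [SigmaFinite ν₂]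
    (h₁ : μ₁ ≪ ν₁) (h₂ : μ₂ ≪ ν₂) :
    (μ₁.prod μ₂).rnDeriv (ν₁.prod ν₂) =ᵐ[ν₁.prod ν₂]
      fun z => μ₁.rnDeriv ν₁ z.1 * μ₂.rnDeriv ν₂ z.2 := by
  have hF : Measurable fun z : α × β => μ₁.rnDeriv ν₁ z.1 * μ₂.rnDeriv ν₂ z.2 :=
    ((μ₁.measurable_rnDeriv ν₁).comp measurable_fst).mul
      ((μ₂.measurable_rnDeriv ν₂).comp measurable_snd)
  have key : μ₁.prod μ₂ =
      (ν₁.prod ν₂).withDensity fun z => μ₁.rnDeriv ν₁ z.1 * μ₂.rnDeriv ν₂ z.2 := by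
    refine Measure.prod_eq fun s t hs ht => ?_
    rw [withDensity_apply _ (hs.prod ht), ← Measure.prod_restrict,
      lintegral_prod_mul (μ₁.measurable_rnDeriv ν₁).aemeasurable
        (μ₂.measurable_rnDeriv ν₂).aemeasurable]
    rw [Measure.setLIntegral_rnDeriv h₁ s, Measure.setLIntegral_rnDeriv h₂ t]
  have := Measure.rnDeriv_withDensity (ν₁.prod ν₂) hF
  rw [← key] at this
  exact this

/-- `llr` of products is the sum of the `llr`s, a.e. w.r.t. the product. -/
lemma llr_prod_ae {μ₁ ν₁ : Measure α} {μ₂ ν₂ : Measure β}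
    [IsFiniteMeasure μ₁] [IsFiniteMeasure μ₂] [SigmaFinite ν₁] [SigmaFinite ν₂]
    (h₁ : μ₁ ≪ ν₁) (h₂ : μ₂ ≪ ν₂) :
    llr (μ₁.prod μ₂) (ν₁.prod ν₂) =ᵐ[μ₁.prod μ₂]
      fun z => llr μ₁ ν₁ z.1 + llr μ₂ ν₂ z.2 := by
  have hac : μ₁.prod μ₂ ≪ ν₁.prod ν₂ := h₁.prod h₂
  have h0 := hac.ae_le (rnDeriv_prod_ae h₁ h₂)
  have e1 : ∀ᵐ z ∂(μ₁.prod μ₂), 0 < μ₁.rnDeriv ν₁ z.1 :=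
    ae_comp_fst (Measure.rnDeriv_pos h₁)
  have e2 : ∀ᵐ z ∂(μ₁.prod μ₂), μ₁.rnDeriv ν₁ z.1 < ⊤ :=
    ae_comp_fst (h₁.ae_le (Measure.rnDeriv_lt_top μ₁ ν₁))
  have e3 : ∀ᵐ z ∂(μ₁.prod μ₂), 0 < μ₂.rnDeriv ν₂ z.2 :=
    ae_comp_snd (Measure.rnDeriv_pos h₂)
  have e4 : ∀ᵐ z ∂(μ₁.prod μ₂), μ₂.rnDeriv ν₂ z.2 < ⊤ :=
    ae_comp_snd (h₂.ae_le (Measure.rnDeriv_lt_top μ₂ ν₂))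
  filter_upwards [h0, e1, e2, e3, e4] with z h0 e1 e2 e3 e4
  rw [llr, h0, llr, llr, ENNReal.toReal_mul]
  rw [Real.log_mul (ENNReal.toReal_pos e1.ne' e2.ne).ne' (ENNReal.toReal_pos e3.ne' e4.ne).ne']

/-- Chain rule for `llr`. -/
lemma llr_trans {R S T : Measure α} [IsFiniteMeasure R] [IsFiniteMeasure S] [IsFiniteMeasure T]
    (hRS : R ≪ S) (hST : S ≪ T) :
    llr R T =ᵐ[R] fun x => llr R S x + llr S T x := by
  have hRT := hRS.trans hST
  have h1 := hRT.ae_le (Measure.rnDeriv_mul_rnDeriv hRS (κ := T))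
  have h2 := Measure.rnDeriv_pos hRS
  have h3 := hRS.ae_le (Measure.rnDeriv_lt_top R S)
  have h4 := hRS.ae_le (Measure.rnDeriv_pos hST)
  have h5 := hRT.ae_le (Measure.rnDeriv_lt_top S T)
  filter_upwards [h1, h2, h3, h4, h5] with x h1 h2 h3 h4 h5
  rw [llr, llr, llr, ← h1, Pi.mul_apply, ENNReal.toReal_mul]
  rw [Real.log_mul (ENNReal.toReal_pos h2.ne' h3.ne).ne' (ENNReal.toReal_pos h4.ne' h5.ne).ne']





lemma lintegral_inv_rnDeriv_le {μ ν : Measure α} [IsFiniteMeasure μ] [IsProbabilityMeasure ν]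
    (h : μ ≪ ν) : ∫⁻ x, (μ.rnDeriv ν x)⁻¹ ∂μ ≤ 1 := by
  have hm : Measurable fun x => (μ.rnDeriv ν x)⁻¹ := (μ.measurable_rnDeriv ν).inv
  rw [← lintegral_rnDeriv_mul h hm.aemeasurable]
  calc ∫⁻ x, μ.rnDeriv ν x * (μ.rnDeriv ν x)⁻¹ ∂ν ≤ ∫⁻ _, 1 ∂ν := by
        refine lintegral_mono fun x => ?_
        rcases eq_or_ne (μ.rnDeriv ν x) 0 with h0 | h0
        · simp [h0]
        rcases eq_or_ne (μ.rnDeriv ν x) ⊤ with ht | ht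
        · simp [ht]
        · rw [ENNReal.mul_inv_cancel h0 ht]
    _ = 1 := by simp

lemma integrable_inv_rnDeriv_toReal {μ ν : Measure α} [IsFiniteMeasure μ] [IsProbabilityMeasure ν]
    (h : μ ≪ ν) : Integrable (fun x => ((μ.rnDeriv ν x)⁻¹).toReal) μ :=
  integrable_toReal_of_lintegral_ne_top (μ.measurable_rnDeriv ν).inv.aemeasurable
    ((lintegral_inv_rnDeriv_le h).trans_lt ENNReal.one_lt_top).ne

/-- The negative part of the log-likelihood ratio is always integrable. -/
lemma integrable_neg_part_llr {μ ν : Measure α} [IsProbabilityMeasure μ] [IsProbabilityMeasure ν]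
    (h : μ ≪ ν) : Integrable (fun x => max (-llr μ ν x) 0) μ := by
  refine Integrable.mono' (integrable_inv_rnDeriv_toReal h)
    (((measurable_llr μ ν).neg.max measurable_const).aestronglyMeasurable) ?_
  filter_upwards [Measure.rnDeriv_pos h, h.ae_le (Measure.rnDeriv_lt_top μ ν)] with x hx hx'
  have ht : 0 < (μ.rnDeriv ν x).toReal := ENNReal.toReal_pos hx.ne' hx'.ne
  rw [Real.norm_of_nonneg (le_max_right _ _), ENNReal.toReal_inv]
  refine max_le ?_ (by positivity)
  have hlog := Real.log_le_sub_one_of_pos (inv_pos.2 ht)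
  rw [Real.log_inv] at hlog
  have : -Real.log (μ.rnDeriv ν x).toReal ≤ (μ.rnDeriv ν x).toReal⁻¹ - 1 := hlog
  rw [llr]
  linarith

/-- Nonnegativity of the KL integral. -/
lemma integral_llr_nonneg {μ ν : Measure α} [IsProbabilityMeasure μ] [IsProbabilityMeasure ν]
    (h : μ ≪ ν) (hi : Integrable (llr μ ν) μ) : 0 ≤ ∫ x, llr μ ν x ∂μ := by
  set g : α → ℝ := fun x => ((μ.rnDeriv ν x)⁻¹).toReal with hgdef
  have hgi : Integrable g μ := integrable_inv_rnDeriv_toReal h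
  have hb : ∀ᵐ x ∂μ, 1 - g x ≤ llr μ ν x := by
    filter_upwards [Measure.rnDeriv_pos h, h.ae_le (Measure.rnDeriv_lt_top μ ν)] with x hx hx'
    have ht : 0 < (μ.rnDeriv ν x).toReal := ENNReal.toReal_pos hx.ne' hx'.ne
    have hlog := Real.log_le_sub_one_of_pos (inv_pos.2 ht)
    rw [Real.log_inv] at hlog
    rw [llr, hgdef]
    simp only [ENNReal.toReal_inv]
    linarith
  have h1 : ∫ x, (1 - g x) ∂μ ≤ ∫ x, llr μ ν x ∂μ :=
    integral_mono_ae ((integrable_const 1).sub hgi) hi hb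
  have h2 : ∫ x, (1 - g x) ∂μ = 1 - ∫ x, g x ∂μ := by
    rw [integral_sub (integrable_const 1) hgi, integral_const]
    simp
  have h3 : ∫ x, g x ∂μ ≤ 1 := by
    have hlt : ∀ᵐ x ∂μ, (μ.rnDeriv ν x)⁻¹ < ⊤ := by
      filter_upwards [Measure.rnDeriv_pos h] with x hx
      simpa [ENNReal.inv_lt_top] using hx
    rw [hgdef]
    beta_reduce
    rw [integral_toReal (f := fun x => (μ.rnDeriv ν x)⁻¹) (μ.measurable_rnDeriv ν).inv.aemeasurable hlt]
    calc (∫⁻ x, (μ.rnDeriv ν x)⁻¹ ∂μ).toReal ≤ (1 : ENNReal).toReal :=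
          ENNReal.toReal_mono ENNReal.one_ne_top (lintegral_inv_rnDeriv_le h)
      _ = 1 := by simp
  linarith

/-- If an integrable function decomposes a.e. as a sum of two measurable functions with
integrable negative parts, then both summands are integrable. -/
lemma integrable_of_add_of_neg_part {μ : Measure α} [IsFiniteMeasure μ] {φ f g : α → ℝ}
    (hφ : Integrable φ μ) (hmf : AEStronglyMeasurable f μ) (hmg : AEStronglyMeasurable g μ)
    (hfg : φ =ᵐ[μ] fun x => f x + g x)
    (hf : Integrable (fun x => max (-f x) 0) μ) (hg : Integrable (fun x => max (-g x) 0) μ) :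
    Integrable f μ ∧ Integrable g μ := by
  have key : ∀ (f g : α → ℝ), AEStronglyMeasurable f μ → (φ =ᵐ[μ] fun x => f x + g x) →
      Integrable (fun x => max (-f x) 0) μ → Integrable (fun x => max (-g x) 0) μ →
      Integrable f μ := by
    intro f g hmf hfg hf hg
    refine Integrable.mono' ((hφ.abs.add hg).add hf) hmf ?_
    filter_upwards [hfg] with x hx
    rw [Real.norm_eq_abs, abs_le]
    simp only [Pi.add_apply]
    constructor
    · have h1 : -f x ≤ max (-f x) 0 := le_max_left _ _
      have h2 : (0:ℝ) ≤ |φ x| + max (-g x) 0 := by positivity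
      linarith
    · have h1 : f x = φ x - g x := by linarith [hx]
      have h2 : φ x ≤ |φ x| := le_abs_self _
      have h3 : -g x ≤ max (-g x) 0 := le_max_left _ _
      have h4 : (0:ℝ) ≤ max (-f x) 0 := le_max_right _ _
      linarith
  refine ⟨key f g hmf hfg hf hg, key g f hmg ?_ hg hf⟩
  filter_upwards [hfg] with x hx
  rw [hx]; ring


end Basic

section Transport

variable {α₁ α₂ β₁ β₂ : Type*} [MeasurableSpace α₁] [MeasurableSpace α₂]
  [MeasurableSpace β₁] [MeasurableSpace β₂]

lemma isProbabilityMeasure_of_coupling {P : Measure α₁}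
    [IsProbabilityMeasure P] {π : Measure (α₁ × β₁)} (h : π.map Prod.fst = P) :
    IsProbabilityMeasure π := by
  constructor
  have := congrArg (fun m : Measure α₁ => m Set.univ) h
  simp only [Measure.map_apply measurable_fst MeasurableSet.univ, Set.preimage_univ] at this
  rw [this]
  exact measure_univ

lemma lintegral_comp_fst {μ : Measure α₁} {ν : Measure β₁} [SFinite μ] [IsProbabilityMeasure ν]
    {f : α₁ → ENNReal} (hf : Measurable f) :
    ∫⁻ z, f z.1 ∂μ.prod ν = ∫⁻ x, f x ∂μ := by
  rw [← lintegral_map hf measurable_fst, Measure.map_fst_prod, measure_univ, one_smul]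

lemma lintegral_comp_snd {μ : Measure α₁} {ν : Measure β₁} [IsProbabilityMeasure μ] [SFinite ν]
    {f : β₁ → ENNReal} (hf : Measurable f) :
    ∫⁻ z, f z.2 ∂μ.prod ν = ∫⁻ y, f y ∂ν := by
  rw [← lintegral_map hf measurable_snd, Measure.map_snd_prod, measure_univ, one_smul]

/-- Subadditivity of transport cost for product measures. -/
lemma transportCost_prod_le (c₁ : α₁ × β₁ → ENNReal) (c₂ : α₂ × β₂ → ENNReal)
    (hc₁ : Measurable c₁) (hc₂ : Measurable c₂)
    (P₁ : Measure α₁) (P₂ : Measure α₂) (R₁ : Measure β₁) (R₂ : Measure β₂)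
    [IsProbabilityMeasure P₁] [IsProbabilityMeasure P₂]
    [IsProbabilityMeasure R₁] [IsProbabilityMeasure R₂] :
    transportCost (fun z : (α₁ × α₂) × (β₁ × β₂) => c₁ (z.1.1, z.2.1) + c₂ (z.1.2, z.2.2))
      (P₁.prod P₂) (R₁.prod R₂)
      ≤ transportCost c₁ P₁ R₁ + transportCost c₂ P₂ R₂ := by
  have hne₁ : Set.Nonempty
      {π : Measure (α₁ × β₁) | π.map Prod.fst = P₁ ∧ π.map Prod.snd = R₁} :=
    ⟨P₁.prod R₁, by rw [Measure.map_fst_prod, measure_univ, one_smul],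
      by rw [Measure.map_snd_prod, measure_univ, one_smul]⟩
  have hne₂ : Set.Nonempty
      {π : Measure (α₂ × β₂) | π.map Prod.fst = P₂ ∧ π.map Prod.snd = R₂} :=
    ⟨P₂.prod R₂, by rw [Measure.map_fst_prod, measure_univ, one_smul],
      by rw [Measure.map_snd_prod, measure_univ, one_smul]⟩
  unfold transportCost
  refine le_biInf_add_biInf hne₁ hne₂ ?_
  intro π₁ hπ₁ π₂ hπ₂
  haveI : IsProbabilityMeasure π₁ := isProbabilityMeasure_of_coupling hπ₁.1
  haveI : IsProbabilityMeasure π₂ := isProbabilityMeasure_of_coupling hπ₂.1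
  set φ : (α₁ × β₁) × (α₂ × β₂) → (α₁ × α₂) × (β₁ × β₂) :=
    fun w => ((w.1.1, w.2.1), (w.1.2, w.2.2)) with hφdef
  have hφ : Measurable φ := by
    apply Measurable.prod <;> apply Measurable.prod <;> fun_prop
  have hfst : (Prod.fst ∘ φ) = Prod.map (Prod.fst : α₁ × β₁ → α₁) (Prod.fst : α₂ × β₂ → α₂) :=
    rfl
  have hsnd : (Prod.snd ∘ φ) = Prod.map (Prod.snd : α₁ × β₁ → β₁) (Prod.snd : α₂ × β₂ → β₂) :=
    rfl
  have hmem : ((π₁.prod π₂).map φ).map Prod.fst = P₁.prod P₂ ∧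
      ((π₁.prod π₂).map φ).map Prod.snd = R₁.prod R₂ := by
    constructor
    · rw [Measure.map_map measurable_fst hφ, hfst,
        ← Measure.map_prod_map _ _ measurable_fst measurable_fst, hπ₁.1, hπ₂.1]
    · rw [Measure.map_map measurable_snd hφ, hsnd,
        ← Measure.map_prod_map _ _ measurable_snd measurable_snd, hπ₁.2, hπ₂.2]
  refine (iInf₂_le ((π₁.prod π₂).map φ) hmem).trans ?_
  have hcm : Measurable fun z : (α₁ × α₂) × (β₁ × β₂) => c₁ (z.1.1, z.2.1) + c₂ (z.1.2, z.2.2) := by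
    apply Measurable.add
    · exact hc₁.comp (by fun_prop)
    · exact hc₂.comp (by fun_prop)
  rw [lintegral_map hcm hφ]
  have : ∀ w : (α₁ × β₁) × (α₂ × β₂),
      c₁ ((φ w).1.1, (φ w).2.1) + c₂ ((φ w).1.2, (φ w).2.2) = c₁ w.1 + c₂ w.2 := fun w => rfl
  simp only [this]
  have hm1 : Measurable fun w : (α₁ × β₁) × (α₂ × β₂) => c₁ w.1 := hc₁.comp measurable_fst
  rw [lintegral_add_left hm1]
  rw [lintegral_comp_fst hc₁, lintegral_comp_snd hc₂]

/-- Superadditivity: the split cost against a joint measure dominates the marginal costs. -/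
lemma transportCost_marginals_le (c₁ : α₁ × β₁ → ENNReal) (c₂ : α₂ × β₂ → ENNReal)
    (hc₁ : Measurable c₁) (hc₂ : Measurable c₂)
    (P₁ : Measure α₁) (P₂ : Measure α₂) [IsProbabilityMeasure P₁] [IsProbabilityMeasure P₂]
    (R : Measure (β₁ × β₂)) :
    transportCost c₁ P₁ (R.map Prod.fst) + transportCost c₂ P₂ (R.map Prod.snd)
      ≤ transportCost (fun z : (α₁ × α₂) × (β₁ × β₂) => c₁ (z.1.1, z.2.1) + c₂ (z.1.2, z.2.2))
        (P₁.prod P₂) R := by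
  unfold transportCost
  refine le_iInf₂ fun π hπ => ?_
  obtain ⟨h1, h2⟩ := hπ
  set pr₁ : (α₁ × α₂) × (β₁ × β₂) → α₁ × β₁ := fun z => (z.1.1, z.2.1) with hpr₁def
  set pr₂ : (α₁ × α₂) × (β₁ × β₂) → α₂ × β₂ := fun z => (z.1.2, z.2.2) with hpr₂def
  have hpr₁ : Measurable pr₁ := by fun_prop
  have hpr₂ : Measurable pr₂ := by fun_prop
  have m11 : (π.map pr₁).map Prod.fst = P₁ := by
    rw [Measure.map_map measurable_fst hpr₁]
    have : (Prod.fst ∘ pr₁) = (Prod.fst ∘ (Prod.fst : (α₁ × α₂) × (β₁ × β₂) → α₁ × α₂)) := rfl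
    rw [this, ← Measure.map_map measurable_fst measurable_fst, h1, Measure.map_fst_prod,
      measure_univ, one_smul]
  have m12 : (π.map pr₁).map Prod.snd = R.map Prod.fst := by
    rw [Measure.map_map measurable_snd hpr₁]
    have : (Prod.snd ∘ pr₁) = (Prod.fst ∘ (Prod.snd : (α₁ × α₂) × (β₁ × β₂) → β₁ × β₂)) := rfl
    rw [this, ← Measure.map_map measurable_fst measurable_snd, h2]
  have m21 : (π.map pr₂).map Prod.fst = P₂ := by
    rw [Measure.map_map measurable_fst hpr₂]
    have : (Prod.fst ∘ pr₂) = (Prod.snd ∘ (Prod.fst : (α₁ × α₂) × (β₁ × β₂) → α₁ × α₂)) := rfl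
    rw [this, ← Measure.map_map measurable_snd measurable_fst, h1, Measure.map_snd_prod,
      measure_univ, one_smul]
  have m22 : (π.map pr₂).map Prod.snd = R.map Prod.snd := by
    rw [Measure.map_map measurable_snd hpr₂]
    have : (Prod.snd ∘ pr₂) = (Prod.snd ∘ (Prod.snd : (α₁ × α₂) × (β₁ × β₂) → β₁ × β₂)) := rfl
    rw [this, ← Measure.map_map measurable_snd measurable_snd, h2]
  calc transportCost c₁ P₁ (R.map Prod.fst) + transportCost c₂ P₂ (R.map Prod.snd)
      ≤ (∫⁻ w, c₁ w ∂(π.map pr₁)) + ∫⁻ w, c₂ w ∂(π.map pr₂) :=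
        add_le_add (iInf₂_le (π.map pr₁) ⟨m11, m12⟩) (iInf₂_le (π.map pr₂) ⟨m21, m22⟩)
    _ = (∫⁻ z, c₁ (pr₁ z) ∂π) + ∫⁻ z, c₂ (pr₂ z) ∂π := by
        rw [lintegral_map hc₁ hpr₁, lintegral_map hc₂ hpr₂]
    _ = ∫⁻ z, c₁ (z.1.1, z.2.1) + c₂ (z.1.2, z.2.2) ∂π := by
        have hm1 : Measurable fun z : (α₁ × α₂) × (β₁ × β₂) => c₁ (pr₁ z) := hc₁.comp hpr₁
        exact (lintegral_add_left hm1 _).symm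


end Transport

section KL

variable {α β : Type*} [MeasurableSpace α] [MeasurableSpace β]

lemma klDiv_eq_top_of_not {R Q : Measure α} (h : ¬ (R ≪ Q ∧ Integrable (llr R Q) R)) :
    klDiv R Q = ⊤ := by
  unfold klDiv
  rw [if_neg h]

lemma klDiv_eq_of {R Q : Measure α} (h1 : R ≪ Q) (h2 : Integrable (llr R Q) R) :
    klDiv R Q = ENNReal.ofReal (∫ y, llr R Q y ∂ R) := by
  unfold klDiv
  rw [if_pos ⟨h1, h2⟩]

lemma map_fst_prod_self (R₁ : Measure α) (R₂ : Measure β) [SFinite R₁]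
    [IsProbabilityMeasure R₂] : (R₁.prod R₂).map Prod.fst = R₁ := by
  rw [Measure.map_fst_prod, measure_univ, one_smul]

lemma map_snd_prod_self (R₁ : Measure α) (R₂ : Measure β) [IsProbabilityMeasure R₁]
    [SFinite R₂] : (R₁.prod R₂).map Prod.snd = R₂ := by
  rw [Measure.map_snd_prod, measure_univ, one_smul]

lemma integrable_comp_fst_of_map {R : Measure (α × β)} {f : α → ℝ} (hf : Measurable f)
    (h : Integrable f (R.map Prod.fst)) : Integrable (fun z : α × β => f z.1) R :=
  (integrable_map_measure hf.aestronglyMeasurable measurable_fst.aemeasurable).mp h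

lemma integrable_comp_snd_of_map {R : Measure (α × β)} {f : β → ℝ} (hf : Measurable f)
    (h : Integrable f (R.map Prod.snd)) : Integrable (fun z : α × β => f z.2) R :=
  (integrable_map_measure hf.aestronglyMeasurable measurable_snd.aemeasurable).mp h

lemma integral_comp_fst {R : Measure (α × β)} {f : α → ℝ} (hf : Measurable f) :
    ∫ z, f z.1 ∂ R = ∫ x, f x ∂(R.map Prod.fst) :=
  (integral_map measurable_fst.aemeasurable hf.aestronglyMeasurable).symm

lemma integral_comp_snd {R : Measure (α × β)} {f : β → ℝ} (hf : Measurable f) :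
    ∫ z, f z.2 ∂ R = ∫ y, f y ∂(R.map Prod.snd) :=
  (integral_map measurable_snd.aemeasurable hf.aestronglyMeasurable).symm

/-- Subadditivity of the KL divergence for products. -/
lemma klDiv_prod_le {R₁ Q₁ : Measure α} {R₂ Q₂ : Measure β}
    [IsProbabilityMeasure R₁] [IsProbabilityMeasure Q₁]
    [IsProbabilityMeasure R₂] [IsProbabilityMeasure Q₂] :
    klDiv (R₁.prod R₂) (Q₁.prod Q₂) ≤ klDiv R₁ Q₁ + klDiv R₂ Q₂ := by
  by_cases h1 : R₁ ≪ Q₁ ∧ Integrable (llr R₁ Q₁) R₁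
  swap
  · rw [klDiv_eq_top_of_not h1]; simp
  by_cases h2 : R₂ ≪ Q₂ ∧ Integrable (llr R₂ Q₂) R₂
  swap
  · rw [klDiv_eq_top_of_not h2]; simp
  obtain ⟨hac1, hi1⟩ := h1
  obtain ⟨hac2, hi2⟩ := h2
  have hll := llr_prod_ae hac1 hac2
  have hfi : Integrable (fun z : α × β => llr R₁ Q₁ z.1) (R₁.prod R₂) := by
    refine integrable_comp_fst_of_map (measurable_llr _ _) ?_
    rwa [map_fst_prod_self]
  have hgi : Integrable (fun z : α × β => llr R₂ Q₂ z.2) (R₁.prod R₂) := by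
    refine integrable_comp_snd_of_map (measurable_llr _ _) ?_
    rwa [map_snd_prod_self]
  have hint : Integrable (llr (R₁.prod R₂) (Q₁.prod Q₂)) (R₁.prod R₂) :=
    (hfi.add hgi).congr hll.symm
  have hsum : ∫ z, llr (R₁.prod R₂) (Q₁.prod Q₂) z ∂(R₁.prod R₂)
      = (∫ x, llr R₁ Q₁ x ∂ R₁) + ∫ y, llr R₂ Q₂ y ∂ R₂ := by
    rw [integral_congr_ae hll, integral_add hfi hgi]
    rw [integral_comp_fst (measurable_llr _ _), integral_comp_snd (measurable_llr _ _),
      map_fst_prod_self, map_snd_prod_self]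
  rw [klDiv_eq_of (hac1.prod hac2) hint, klDiv_eq_of hac1 hi1, klDiv_eq_of hac2 hi2, hsum]
  exact ENNReal.ofReal_add_le

/-- Superadditivity of the KL divergence w.r.t. marginals. -/
lemma klDiv_le_klDiv_prod {Q₁ : Measure α} {Q₂ : Measure β} (R : Measure (α × β))
    [IsProbabilityMeasure R] [IsProbabilityMeasure Q₁] [IsProbabilityMeasure Q₂] :
    klDiv (R.map Prod.fst) Q₁ + klDiv (R.map Prod.snd) Q₂ ≤ klDiv R (Q₁.prod Q₂) := by
  by_cases h : R ≪ Q₁.prod Q₂ ∧ Integrable (llr R (Q₁.prod Q₂)) R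
  swap
  · rw [klDiv_eq_top_of_not h]; exact le_top
  obtain ⟨hac, hint⟩ := h
  haveI : IsProbabilityMeasure (R.map Prod.fst) :=
    Measure.isProbabilityMeasure_map measurable_fst.aemeasurable
  haveI : IsProbabilityMeasure (R.map Prod.snd) :=
    Measure.isProbabilityMeasure_map measurable_snd.aemeasurable
  have hac1 : R.map Prod.fst ≪ Q₁ := by
    have := hac.map measurable_fst
    rwa [map_fst_prod_self] at this
  have hac2 : R.map Prod.snd ≪ Q₂ := by
    have := hac.map measurable_snd
    rwa [map_snd_prod_self] at this
  have hR12 : R ≪ (R.map Prod.fst).prod (R.map Prod.snd) :=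
    absolutelyContinuous_prod_marginals R Q₁ Q₂ hac
  have hprod : (R.map Prod.fst).prod (R.map Prod.snd) ≪ Q₁.prod Q₂ := hac1.prod hac2
  have hd : llr R (Q₁.prod Q₂) =ᵐ[R]
      fun z => llr R ((R.map Prod.fst).prod (R.map Prod.snd)) z +
        (llr (R.map Prod.fst) Q₁ z.1 + llr (R.map Prod.snd) Q₂ z.2) := by
    have e1 := llr_trans hR12 hprod
    have e2 : llr ((R.map Prod.fst).prod (R.map Prod.snd)) (Q₁.prod Q₂) =ᵐ[R]
        fun z => llr (R.map Prod.fst) Q₁ z.1 + llr (R.map Prod.snd) Q₂ z.2 :=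
      hR12.ae_le (llr_prod_ae hac1 hac2)
    filter_upwards [e1, e2] with z h1 h2
    rw [h1, h2]
  have hnA : Integrable
      (fun z => max (-llr R ((R.map Prod.fst).prod (R.map Prod.snd)) z) 0) R :=
    integrable_neg_part_llr hR12
  have hnB1 : Integrable (fun z : α × β => max (-llr (R.map Prod.fst) Q₁ z.1) 0) R :=
    integrable_comp_fst_of_map ((measurable_llr _ _).neg.max measurable_const)
      (integrable_neg_part_llr hac1)
  have hnB2 : Integrable (fun z : α × β => max (-llr (R.map Prod.snd) Q₂ z.2) 0) R :=
    integrable_comp_snd_of_map ((measurable_llr _ _).neg.max measurable_const)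
      (integrable_neg_part_llr hac2)
  have hnB : Integrable
      (fun z : α × β =>
        max (-(llr (R.map Prod.fst) Q₁ z.1 + llr (R.map Prod.snd) Q₂ z.2)) 0) R := by
    refine Integrable.mono' (hnB1.add hnB2)
      ((((measurable_llr _ _).comp measurable_fst).add
        ((measurable_llr _ _).comp measurable_snd)).neg.max
          measurable_const).aestronglyMeasurable ?_
    refine Filter.Eventually.of_forall fun z => ?_
    rw [Real.norm_of_nonneg (le_max_right _ _)]
    simp only [Pi.add_apply]
    have h1 : -llr (R.map Prod.fst) Q₁ z.1 ≤ max (-llr (R.map Prod.fst) Q₁ z.1) 0 :=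
      le_max_left _ _
    have h2 : -llr (R.map Prod.snd) Q₂ z.2 ≤ max (-llr (R.map Prod.snd) Q₂ z.2) 0 :=
      le_max_left _ _
    have h3 : (0:ℝ) ≤ max (-llr (R.map Prod.fst) Q₁ z.1) 0 := le_max_right _ _
    have h4 : (0:ℝ) ≤ max (-llr (R.map Prod.snd) Q₂ z.2) 0 := le_max_right _ _
    refine max_le (by linarith) (by linarith)
  have hmA : AEStronglyMeasurable
      (llr R ((R.map Prod.fst).prod (R.map Prod.snd))) R :=
    (measurable_llr _ _).aestronglyMeasurable
  have hmB : AEStronglyMeasurable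
      (fun z : α × β => llr (R.map Prod.fst) Q₁ z.1 + llr (R.map Prod.snd) Q₂ z.2) R :=
    (((measurable_llr _ _).comp measurable_fst).add
      ((measurable_llr _ _).comp measurable_snd)).aestronglyMeasurable
  obtain ⟨hiA, hiB⟩ := integrable_of_add_of_neg_part hint hmA hmB hd hnA hnB
  obtain ⟨hiB1, hiB2⟩ := integrable_of_add_of_neg_part
    (f := fun z : α × β => llr (R.map Prod.fst) Q₁ z.1)
    (g := fun z : α × β => llr (R.map Prod.snd) Q₂ z.2) hiB
    (((measurable_llr _ _).comp measurable_fst).aestronglyMeasurable)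
    (((measurable_llr _ _).comp measurable_snd).aestronglyMeasurable)
    (Filter.Eventually.of_forall fun z => rfl) hnB1 hnB2
  have hInt1 : Integrable (llr (R.map Prod.fst) Q₁) (R.map Prod.fst) := by
    refine (integrable_map_measure (measurable_llr _ _).aestronglyMeasurable
      measurable_fst.aemeasurable).mpr ?_
    exact hiB1
  have hInt2 : Integrable (llr (R.map Prod.snd) Q₂) (R.map Prod.snd) := by
    refine (integrable_map_measure (measurable_llr _ _).aestronglyMeasurable
      measurable_snd.aemeasurable).mpr ?_
    exact hiB2
  have hge : (∫ x, llr (R.map Prod.fst) Q₁ x ∂(R.map Prod.fst)) +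
      ∫ y, llr (R.map Prod.snd) Q₂ y ∂(R.map Prod.snd) ≤ ∫ z, llr R (Q₁.prod Q₂) z ∂ R := by
    rw [integral_congr_ae hd, integral_add hiA hiB, integral_add hiB1 hiB2]
    have h0 : 0 ≤ ∫ z, llr R ((R.map Prod.fst).prod (R.map Prod.snd)) z ∂ R :=
      integral_llr_nonneg hR12 hiA
    have hm1 : ∫ z, llr (R.map Prod.fst) Q₁ z.1 ∂ R
        = ∫ x, llr (R.map Prod.fst) Q₁ x ∂(R.map Prod.fst) :=
      integral_comp_fst (measurable_llr _ _)
    have hm2 : ∫ z, llr (R.map Prod.snd) Q₂ z.2 ∂ R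
        = ∫ y, llr (R.map Prod.snd) Q₂ y ∂(R.map Prod.snd) :=
      integral_comp_snd (measurable_llr _ _)
    rw [hm1, hm2]
    linarith
  rw [klDiv_eq_of hac hint, klDiv_eq_of hac1 hInt1, klDiv_eq_of hac2 hInt2]
  rw [← ENNReal.ofReal_add (integral_llr_nonneg hac1 hInt1) (integral_llr_nonneg hac2 hInt2)]
  exact ENNReal.ofReal_le_ofReal hge

end KL

lemma measurable_lpCost (m : ℕ) (p : ℝ) : Measurable (lpCost m p) := by
  unfold lpCost
  refine ENNReal.measurable_ofReal.comp (Finset.measurable_sum _ fun i _ => ?_)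
  fun_prop

end ProxAux

/-- Additivity of the proximal `p`-Wasserstein KL divergence for product measures, under
the identification `ℝⁿ = ℝ^{n₁} × ℝ^{n₂}` (with `n = n₁ + n₂` and
`‖(x₁,x₂) − (y₁,y₂)‖_p^p = ‖x₁ − y₁‖_p^p + ‖x₂ − y₂‖_p^p`):
`𝔇^p_{KL,ε}(P₁ ⊗ P₂ ‖ Q₁ ⊗ Q₂) = 𝔇^p_{KL,ε}(P₁ ‖ Q₁) + 𝔇^p_{KL,ε}(P₂ ‖ Q₂)`. -/
theorem proxOTKL_additive_prod
    (n₁ n₂ : ℕ) (p : ℝ) (hp : 1 ≤ p)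
    (P₁ Q₁ : Measure (Fin n₁ → ℝ)) [IsProbabilityMeasure P₁] [IsProbabilityMeasure Q₁]
    (P₂ Q₂ : Measure (Fin n₂ → ℝ)) [IsProbabilityMeasure P₂] [IsProbabilityMeasure Q₂]
    -- all measures have finite `p`-th moments
    (hP₁ : ∫⁻ x, ENNReal.ofReal (∑ i, |x i| ^ p) ∂P₁ < ⊤)
    (hQ₁ : ∫⁻ x, ENNReal.ofReal (∑ i, |x i| ^ p) ∂Q₁ < ⊤)
    (hP₂ : ∫⁻ x, ENNReal.ofReal (∑ i, |x i| ^ p) ∂P₂ < ⊤)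
    (hQ₂ : ∫⁻ x, ENNReal.ofReal (∑ i, |x i| ^ p) ∂Q₂ < ⊤)
    (ε : ℝ) (hε : 0 < ε) :
    proxOTKL
      (fun z : ((Fin n₁ → ℝ) × (Fin n₂ → ℝ)) × ((Fin n₁ → ℝ) × (Fin n₂ → ℝ)) =>
        lpCost n₁ p (z.1.1, z.2.1) + lpCost n₂ p (z.1.2, z.2.2))
      ε (P₁.prod P₂) (Q₁.prod Q₂) =
    proxOTKL (lpCost n₁ p) ε P₁ Q₁ + proxOTKL (lpCost n₂ p) ε P₂ Q₂ := by
  classical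
  have hc₁ : Measurable (lpCost n₁ p) := ProxAux.measurable_lpCost n₁ p
  have hc₂ : Measurable (lpCost n₂ p) := ProxAux.measurable_lpCost n₂ p
  apply le_antisymm
  · unfold proxOTKL
    rw [ENNReal.iInf_add]
    refine le_iInf fun R₁ => ?_
    rw [ENNReal.add_iInf]
    refine le_iInf fun R₂ => ?_
    haveI hprodP : IsProbabilityMeasure
        ((R₁ : Measure (Fin n₁ → ℝ)).prod (R₂ : Measure (Fin n₂ → ℝ))) := inferInstance
    refine (iInf_le _ (⟨(R₁ : Measure (Fin n₁ → ℝ)).prod (R₂ : Measure (Fin n₂ → ℝ)), hprodP⟩ :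
      ProbabilityMeasure ((Fin n₁ → ℝ) × (Fin n₂ → ℝ)))).trans ?_
    refine le_trans (add_le_add
      (ProxAux.transportCost_prod_le (lpCost n₁ p) (lpCost n₂ p) hc₁ hc₂ P₁ P₂ _ _)
      (mul_le_mul_right ProxAux.klDiv_prod_le _)) ?_
    exact le_of_eq (by ring)
  · unfold proxOTKL
    refine le_iInf fun R => ?_
    haveI h1 : IsProbabilityMeasure
        ((R : Measure ((Fin n₁ → ℝ) × (Fin n₂ → ℝ))).map Prod.fst) :=
      Measure.isProbabilityMeasure_map measurable_fst.aemeasurable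
    haveI h2 : IsProbabilityMeasure
        ((R : Measure ((Fin n₁ → ℝ) × (Fin n₂ → ℝ))).map Prod.snd) :=
      Measure.isProbabilityMeasure_map measurable_snd.aemeasurable
    refine le_trans (add_le_add
      (iInf_le _ (⟨_, h1⟩ : ProbabilityMeasure (Fin n₁ → ℝ)))
      (iInf_le _ (⟨_, h2⟩ : ProbabilityMeasure (Fin n₂ → ℝ)))) ?_
    refine le_trans (le_of_eq ?_) (add_le_add
      (ProxAux.transportCost_marginals_le (lpCost n₁ p) (lpCost n₂ p) hc₁ hc₂ P₁ P₂ _)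
      (mul_le_mul_right (ProxAux.klDiv_le_klDiv_prod _) _))
    simp only [ProbabilityMeasure.coe_mk]
    ring
end
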